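/- arXiv:1602.01776 — 2 statements merged into one kernel-verified Lean document; each statement's English description precedes it below -/
import Mathlib

section
/- Let O be a complete discrete valuation ring with finite residue field, and let M be a finite free O-module with an O-linear endomorphism u. Then the sequence of endomorphisms u^{N!} converges (in the m-adic topology on End_O(M), where m is the maximal ideal of O) to an idempotent e ∈ End_O(M) which commutes with u; moreover u restricts to an automorphism of e·M, and for every m' ∈ (1−e)·M one has u^{N!} m' → 0 as N → ∞. -/
section aux
variable {O : Type*} [CommRing O]

lemma mem_smul_top_pi' {ι : Type*} [Fintype ι] (J : Ideal O) (x : ι → O) :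
    x ∈ (J • ⊤ : Submodule O (ι → O)) ↔ ∀ i, x i ∈ J := by
  constructor
  · intro hx i
    refine Submodule.smul_induction_on hx ?_ ?_
    · intro c hc m _; exact J.mul_mem_right _ hc
    · intro a b ha hb; exact J.add_mem ha hb
  · intro hx
    classical
    rw [pi_eq_sum_univ x]
    exact Submodule.sum_mem _ fun i _ => Submodule.smul_mem_smul (hx i) trivial

lemma mem_smul_top_equiv' {R : Type*} [AddCommGroup R] [Module O R]
    {N : Type*} [AddCommGroup N] [Module O N] (e : R ≃ₗ[O] N) (J : Ideal O) (x : R) :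
    x ∈ (J • ⊤ : Submodule O R) ↔ e x ∈ (J • ⊤ : Submodule O N) := by
  constructor
  · intro hx
    have : e x ∈ Submodule.map (e : R →ₗ[O] N) (J • ⊤) := ⟨x, hx, rfl⟩
    rwa [Submodule.map_smul'', Submodule.map_top, LinearEquiv.range] at this
  · intro hx
    have : x ∈ Submodule.map (e.symm : N →ₗ[O] R) (J • ⊤) := ⟨e x, hx, e.symm_apply_apply x⟩
    rwa [Submodule.map_smul'', Submodule.map_top, LinearEquiv.range] at this

lemma smul_top_self' (J : Ideal O) : (J • ⊤ : Submodule O O) = J := by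
  ext x
  constructor
  · intro hx
    exact Submodule.smul_induction_on hx (fun c hc m _ => J.mul_mem_right _ hc)
      (fun a b ha hb => J.add_mem ha hb)
  · intro hx; simpa using Submodule.smul_mem_smul hx (Submodule.mem_top (x := (1:O)))

variable {M : Type*} [AddCommGroup M] [Module O M]

lemma mul_mem_smul_top_left (J : Ideal O) (y : Module.End O M) {h : Module.End O M}
    (hh : h ∈ (J • ⊤ : Submodule O (Module.End O M))) :
    y * h ∈ (J • ⊤ : Submodule O (Module.End O M)) := by
  refine Submodule.smul_induction_on hh ?_ ?_
  · intro c hc x _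
    rw [mul_smul_comm]
    exact Submodule.smul_mem_smul hc trivial
  · intro a b ha hb
    rw [mul_add]; exact Submodule.add_mem _ ha hb

lemma mul_mem_smul_top_right (J : Ideal O) (y : Module.End O M) {h : Module.End O M}
    (hh : h ∈ (J • ⊤ : Submodule O (Module.End O M))) :
    h * y ∈ (J • ⊤ : Submodule O (Module.End O M)) := by
  refine Submodule.smul_induction_on hh ?_ ?_
  · intro c hc x _
    rw [smul_mul_assoc]
    exact Submodule.smul_mem_smul hc trivial
  · intro a b ha hb
    rw [add_mul]; exact Submodule.add_mem _ ha hb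

lemma apply_mem_smul_top (J : Ideal O) {h : Module.End O M}
    (hh : h ∈ (J • ⊤ : Submodule O (Module.End O M))) (z : M) :
    h z ∈ (J • ⊤ : Submodule O M) := by
  refine Submodule.smul_induction_on (p := fun h => h z ∈ (J • ⊤ : Submodule O M)) hh ?_ ?_
  · intro c hc x _
    rw [LinearMap.smul_apply]
    exact Submodule.smul_mem_smul hc trivial
  · intro a b ha hb
    rw [LinearMap.add_apply]; exact Submodule.add_mem _ ha hb

end aux

section transfer
variable {O : Type*} [CommRing O] (I : Ideal O) [IsAdicComplete I O]
variable {R : Type*} [AddCommGroup R] [Module O R]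
variable {ι : Type*} [Fintype ι]

lemma haus_of_equiv (eqv : R ≃ₗ[O] (ι → O)) (x : R)
    (hx : ∀ n : ℕ, x ∈ (I ^ n • ⊤ : Submodule O R)) : x = 0 := by
  have hc : ∀ i, eqv x i = 0 := by
    intro i
    refine IsHausdorff.haus (inferInstance : IsHausdorff I O) _ fun n => ?_
    rw [SModEq.zero, smul_top_self']
    exact (mem_smul_top_pi' _ _).mp ((mem_smul_top_equiv' eqv _ x).mp (hx n)) i
  have : eqv x = 0 := funext hc
  exact (LinearEquiv.map_eq_zero_iff eqv).mp this

lemma prec_of_equiv (eqv : R ≃ₗ[O] (ι → O)) (f : ℕ → R)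
    (hf : ∀ m n : ℕ, m ≤ n → f n - f m ∈ (I ^ m • ⊤ : Submodule O R)) :
    ∃ L : R, ∀ n : ℕ, f n - L ∈ (I ^ n • ⊤ : Submodule O R) := by
  have hcoord : ∀ i, ∃ Li : O, ∀ n, (fun n => eqv (f n) i) n ≡ Li
      [SMOD (I ^ n • ⊤ : Submodule O O)] := by
    intro i
    refine IsPrecomplete.prec (inferInstance : IsPrecomplete I O) ?_
    intro m n hmn
    rw [SModEq.sub_mem, smul_top_self']
    have := (mem_smul_top_pi' _ _).mp ((mem_smul_top_equiv' eqv _ _).mp (hf m n hmn)) i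
    rw [map_sub] at this
    simpa using (I ^ m).neg_mem this
  choose L hL using hcoord
  refine ⟨eqv.symm L, fun n => ?_⟩
  rw [mem_smul_top_equiv' eqv, mem_smul_top_pi']
  intro i
  have := hL i n
  rw [SModEq.sub_mem, smul_top_self'] at this
  simpa [map_sub] using this

end transfer

lemma finite_quot_pow_maximalIdeal (O : Type*) [CommRing O] [IsDomain O]
    [IsDiscreteValuationRing O] [Finite (IsLocalRing.ResidueField O)] (k : ℕ) :
    Finite (O ⧸ (IsLocalRing.maximalIdeal O ^ k)) := by
  induction k with
  | zero =>
      rw [pow_zero, Ideal.one_eq_top]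
      exact Finite.of_subsingleton
  | succ k ih =>
      set I := IsLocalRing.maximalIdeal O with hI
      obtain ⟨π, hπ⟩ := IsDiscreteValuationRing.exists_irreducible O
      have hspan : I = Ideal.span {π} := (IsDiscreteValuationRing.irreducible_iff_uniformizer π).mp hπ
      set q : O →+* O ⧸ (I ^ (k+1)) := Ideal.Quotient.mk (I ^ (k+1)) with hq
      set J : Ideal (O ⧸ (I ^ (k+1))) := Ideal.map q (I ^ k) with hJ
      have hπk : π ^ k ∈ I ^ k := by
        rw [hspan, Ideal.span_singleton_pow]
        exact Ideal.mem_span_singleton_self _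
      have hJfin : Finite J := by
        have hsurj : Function.Surjective (fun c : IsLocalRing.ResidueField O =>
            (⟨q (c.out * π ^ k), Ideal.mem_map_of_mem q
              ((I ^ k).mul_mem_left _ hπk)⟩ : J)) := by
          rintro ⟨y, hy⟩
          obtain ⟨z, hz, rfl⟩ := Ideal.mem_image_of_mem_map_of_surjective q
            Ideal.Quotient.mk_surjective hy
          simp only [SetLike.mem_coe] at hz
          have hdvd : π ^ k ∣ z := by
            rwa [hspan, Ideal.span_singleton_pow, Ideal.mem_span_singleton] at hz
          obtain ⟨a, rfl⟩ := hdvd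
          refine ⟨Ideal.Quotient.mk I a, ?_⟩
          have h1 : Ideal.Quotient.mk I ((Ideal.Quotient.mk I a).out) = Ideal.Quotient.mk I a :=
            Quotient.out_eq' _
          have hmem : (Ideal.Quotient.mk I a).out - a ∈ I := Ideal.Quotient.eq.mp h1
          have h2 : ((Ideal.Quotient.mk I a).out - a) * π ^ k ∈ I ^ (k+1) := by
            rw [pow_succ']
            exact Ideal.mul_mem_mul hmem hπk
          have h3 : (Ideal.Quotient.mk I a).out * π ^ k - π ^ k * a ∈ I ^ (k+1) := by
            have heq : (Ideal.Quotient.mk I a).out * π ^ k - π ^ k * a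
                = ((Ideal.Quotient.mk I a).out - a) * π ^ k := by ring
            rw [heq]; exact h2
          have h4 : q ((Ideal.Quotient.mk I a).out * π ^ k) = q (π ^ k * a) :=
            Ideal.Quotient.eq.mpr h3
          exact Subtype.ext h4
        exact Finite.of_surjective _ hsurj
      have hquot : Finite ((O ⧸ (I ^ (k+1))) ⧸ J) := by
        have e := DoubleQuot.quotQuotEquivQuotOfLE
          (Ideal.pow_le_pow_right (Nat.le_succ k) : I ^ (k+1) ≤ I ^ k)
        exact Finite.of_equiv _ e.symm.toEquiv
      haveI := hJfin; haveI := hquot; exact Finite.of_ideal_quotient J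

section pigeonhole
variable {O : Type*} [CommRing O] [IsDomain O] [IsDiscreteValuationRing O]
  [Finite (IsLocalRing.ResidueField O)]
  {M : Type*} [AddCommGroup M] [Module O M] [Module.Free O M] [Module.Finite O M]

lemma exists_period (u : Module.End O M) (k : ℕ) :
    ∃ i p : ℕ, 0 < p ∧ ∀ a b : ℕ, i ≤ a → i ≤ b → a % p = b % p →
      u ^ a - u ^ b ∈
        (IsLocalRing.maximalIdeal O ^ k • ⊤ : Submodule O (Module.End O M)) := by
  classical
  set I := IsLocalRing.maximalIdeal O with hIdef
  set S : Submodule O (Module.End O M) := I ^ k • ⊤ with hS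
  set b := Module.Free.chooseBasis O (Module.End O M) with hb
  set eqv := b.equivFun with heqv
  haveI := finite_quot_pow_maximalIdeal O k
  set g : ℕ → (Module.Free.ChooseBasisIndex O (Module.End O M) → (O ⧸ (I ^ k))) :=
    fun n i => Ideal.Quotient.mk (I ^ k) (eqv (u ^ n) i) with hg
  obtain ⟨a, b', hne, heq⟩ := Finite.exists_ne_map_eq_of_infinite g
  have key : ∀ a b : ℕ, g a = g b → u ^ a - u ^ b ∈ S := by
    intro a b h
    rw [hS, mem_smul_top_equiv' eqv, mem_smul_top_pi']
    intro i
    have : Ideal.Quotient.mk (I ^ k) (eqv (u ^ a) i) =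
        Ideal.Quotient.mk (I ^ k) (eqv (u ^ b) i) := congrFun (by exact h) i
    have := Ideal.Quotient.eq.mp this
    simpa [map_sub] using this
  obtain ⟨a, p, hp, hab⟩ : ∃ a p : ℕ, 0 < p ∧ u ^ a - u ^ (a + p) ∈ S := by
    rcases lt_or_gt_of_ne hne with h | h
    · exact ⟨a, b' - a, by omega, by
        have := key a b' heq
        rwa [Nat.add_sub_cancel' (le_of_lt h)]⟩
    · exact ⟨b', a - b', by omega, by
        have := key b' a heq.symm
        rwa [Nat.add_sub_cancel' (le_of_lt h)]⟩
  refine ⟨a, p, hp, ?_⟩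
  have hshift : ∀ t : ℕ, u ^ (a + t) - u ^ (a + p + t) ∈ S := by
    intro t
    have : u ^ (a + t) - u ^ (a + p + t) = (u ^ a - u ^ (a + p)) * u ^ t := by
      rw [sub_mul, ← pow_add, ← pow_add]
    rw [this]
    exact mul_mem_smul_top_right _ _ hab
  have hmul : ∀ s t : ℕ, u ^ (a + t) - u ^ (a + p * s + t) ∈ S := by
    intro s
    induction s with
    | zero => intro t; simp
    | succ s ih =>
        intro t
        have h1 := ih t
        have h2 := hshift (p * s + t)
        have : u ^ (a + t) - u ^ (a + p * (s+1) + t) =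
            (u ^ (a + t) - u ^ (a + p * s + t)) +
            (u ^ (a + (p * s + t)) - u ^ (a + p + (p * s + t))) := by
          have e1 : a + p * s + t = a + (p * s + t) := by ring
          have e2 : a + p * (s+1) + t = a + p + (p * s + t) := by ring
          rw [e1, e2]; abel
        rw [this]
        exact S.add_mem h1 h2
  have main : ∀ x y : ℕ, a ≤ x → a ≤ y → x ≤ y → x % p = y % p → u ^ x - u ^ y ∈ S := by
    intro x y hx hy hxy hmod
    have hdvd : p ∣ y - x := (Nat.modEq_iff_dvd' hxy).mp hmod
    obtain ⟨s, hs⟩ := hdvd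
    have hyx : y = a + p * s + (x - a) := by omega
    have hxx : x = a + (x - a) := by omega
    have heq2 : u ^ x - u ^ y = u ^ (a + (x - a)) - u ^ (a + p * s + (x - a)) := by
      rw [← hxx, ← hyx]
    rw [heq2]
    exact hmul s (x - a)
  intro x y hx hy hmod
  rcases le_total x y with h | h
  · exact main x y hx hy h hmod
  · have := main y x hy hx h hmod.symm
    simpa using S.neg_mem this
end pigeonhole

/-- Existence of Hida's ordinary projector `e = lim_N u^{N!}`: if `O` is a complete discrete
valuation ring with finite residue field, `M` a finite free `O`-module and `u` an `O`-linear
endomorphism, then `u^{N!}` converges `m`-adically in `End_O(M)` to an idempotent `e`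
commuting with `u`; `u` restricts to an automorphism of `e·M`, and `u^{N!} m' → 0` for every
`m'` in the image of `1 - e`. -/
theorem hida_ordinary_projector {O : Type*} [CommRing O] [IsDomain O]
    [IsDiscreteValuationRing O] [IsAdicComplete (IsLocalRing.maximalIdeal O) O]
    [Finite (IsLocalRing.ResidueField O)]
    {M : Type*} [AddCommGroup M] [Module O M] [Module.Free O M] [Module.Finite O M]
    (u : Module.End O M) :
    ∃ e : Module.End O M,
      (∀ k : ℕ, ∃ N₀ : ℕ, ∀ N ≥ N₀,
        u ^ Nat.factorial N - e ∈
          (IsLocalRing.maximalIdeal O ^ k) • (⊤ : Submodule O (Module.End O M))) ∧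
      IsIdempotentElem e ∧
      Commute u e ∧
      Set.BijOn u (LinearMap.range e : Set M) (LinearMap.range e : Set M) ∧
      ∀ m' ∈ LinearMap.range (1 - e), ∀ k : ℕ, ∃ N₀ : ℕ, ∀ N ≥ N₀,
        (u ^ Nat.factorial N) m' ∈ (IsLocalRing.maximalIdeal O ^ k) • (⊤ : Submodule O M) := by
  classical
  set I := IsLocalRing.maximalIdeal O with hIdef
  obtain ⟨i, p, hp, hP⟩ : ∃ i p : ℕ → ℕ, (∀ k, 0 < p k) ∧ ∀ k, ∀ a b : ℕ,
      i k ≤ a → i k ≤ b → a % p k = b % p k →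
      u ^ a - u ^ b ∈ (I ^ k • ⊤ : Submodule O (Module.End O M)) := by
    choose i p hp hP using fun k => exists_period u k
    exact ⟨i, p, hp, hP⟩
  set B : ℕ → ℕ := fun k => (Finset.range (k+1)).sup (fun j => max (i j) (p j)) with hB
  set c : ℕ → ℕ := fun k => B k + k + 2 with hc
  have hiB : ∀ k, i k ≤ B k := fun k =>
    le_trans (le_max_left _ _) (Finset.le_sup (f := fun j => max (i j) (p j)) (Finset.self_mem_range_succ k))
  have hpB : ∀ k, p k ≤ B k := fun k =>
    le_trans (le_max_right _ _) (Finset.le_sup (f := fun j => max (i j) (p j)) (Finset.self_mem_range_succ k))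
  have hBmono : ∀ {m n : ℕ}, m ≤ n → B m ≤ B n := by
    intro m n hmn
    exact Finset.sup_mono (Finset.range_subset_range.mpr (by omega))
  have hcmono : ∀ {m n : ℕ}, m ≤ n → c m ≤ c n := by
    intro m n hmn
    simp only [hc]
    have := hBmono hmn
    omega
  -- arithmetic helpers
  have hfact : ∀ k n : ℕ, c k ≤ n → i k < n.factorial ∧ p k ∣ n.factorial := by
    intro k n hn
    have h1 : i k < n := by have := hiB k; simp only [hc] at hn; omega
    have h2 : p k ≤ n := by have := hpB k; simp only [hc] at hn; omega
    constructor
    · exact lt_of_lt_of_le h1 (Nat.self_le_factorial n)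
    · exact Nat.dvd_factorial (hp k) h2
  -- the two Cauchy sequences
  set f : ℕ → Module.End O M := fun k => u ^ (c k).factorial with hf
  set g : ℕ → Module.End O M := fun k => u ^ ((c k).factorial - 1) with hg
  set eqv := (Module.Free.chooseBasis O (Module.End O M)).equivFun with heqv
  have hfP : ∀ k n m : ℕ, c k ≤ n → c k ≤ m →
      u ^ n.factorial - u ^ m.factorial ∈ (I ^ k • ⊤ : Submodule O (Module.End O M)) := by
    intro k n m hn hm
    obtain ⟨h1, h2⟩ := hfact k n hn
    obtain ⟨h3, h4⟩ := hfact k m hm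
    refine hP k _ _ (le_of_lt h1) (le_of_lt h3) ?_
    exact ((Nat.modEq_zero_iff_dvd).mpr h2).trans ((Nat.modEq_zero_iff_dvd).mpr h4).symm
  have hfcau : ∀ m n : ℕ, m ≤ n → f n - f m ∈ (I ^ m • ⊤ : Submodule O (Module.End O M)) :=
    fun m n hmn => hfP m (c n) (c m) (hcmono hmn) le_rfl
  obtain ⟨e, he⟩ := prec_of_equiv I eqv f hfcau
  have hgP : ∀ k n m : ℕ, c k ≤ n → c k ≤ m →
      u ^ (n.factorial - 1) - u ^ (m.factorial - 1) ∈
        (I ^ k • ⊤ : Submodule O (Module.End O M)) := by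
    intro k n m hn hm
    obtain ⟨h1, h2⟩ := hfact k n hn
    obtain ⟨h3, h4⟩ := hfact k m hm
    refine hP k _ _ (by omega) (by omega) ?_
    have hmodf : Nat.ModEq (p k) n.factorial m.factorial :=
      ((Nat.modEq_zero_iff_dvd).mpr h2).trans ((Nat.modEq_zero_iff_dvd).mpr h4).symm
    refine Nat.ModEq.add_right_cancel' 1 ?_
    rwa [Nat.sub_add_cancel (Nat.factorial_pos n), Nat.sub_add_cancel (Nat.factorial_pos m)]
  have hgcau : ∀ m n : ℕ, m ≤ n → g n - g m ∈ (I ^ m • ⊤ : Submodule O (Module.End O M)) :=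
    fun m n hmn => hgP m (c n) (c m) (hcmono hmn) le_rfl
  obtain ⟨w, hw⟩ := prec_of_equiv I eqv g hgcau
  -- basic facts about the approximants
  have hifact : ∀ k, i k < (c k).factorial ∧ p k ∣ (c k).factorial := fun k => hfact k (c k) le_rfl
  have hufg : ∀ k, u * g k = f k := by
    intro k
    simp only [hg, hf]
    rw [← pow_succ', Nat.sub_add_cancel (Nat.factorial_pos _)]
  have hgfu : ∀ k, g k * u = f k := by
    intro k
    simp only [hg, hf]
    rw [← pow_succ, Nat.sub_add_cancel (Nat.factorial_pos _)]
  -- u * w = e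
  have hue : u * w = e := by
    rw [← sub_eq_zero]
    refine haus_of_equiv I eqv _ (fun k => ?_)
    have hdecomp : u * w - e = u * (w - g k) + (f k - e) := by
      rw [mul_sub, hufg k]; abel
    rw [hdecomp]
    refine Submodule.add_mem _ ?_ (he k)
    exact mul_mem_smul_top_left _ _ (by simpa using Submodule.neg_mem _ (hw k))
  -- w * u = e
  have hwu : w * u = e := by
    rw [← sub_eq_zero]
    refine haus_of_equiv I eqv _ (fun k => ?_)
    have hdecomp : w * u - e = (w - g k) * u + (f k - e) := by
      rw [sub_mul, hgfu k]; abel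
    rw [hdecomp]
    refine Submodule.add_mem _ ?_ (he k)
    exact mul_mem_smul_top_right _ _ (by simpa using Submodule.neg_mem _ (hw k))
  -- e * w = w
  have hew : e * w = w := by
    rw [← sub_eq_zero]
    refine haus_of_equiv I eqv _ (fun k => ?_)
    obtain ⟨h1, h2⟩ := hifact k
    have hfg : f k * g k = u ^ ((c k).factorial + ((c k).factorial - 1)) := by
      simp only [hf, hg, ← pow_add]
    have h3 : f k * g k - g k ∈ (I ^ k • ⊤ : Submodule O (Module.End O M)) := by
      rw [hfg]
      refine hP k _ _ (by omega) (by omega) ?_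
      have := Nat.ModEq.add_right ((c k).factorial - 1) ((Nat.modEq_zero_iff_dvd).mpr h2)
      rw [zero_add] at this; exact this
    have hdecomp : e * w - w =
        (e - f k) * w + f k * (w - g k) + (f k * g k - g k) + (g k - w) := by
      simp only [sub_mul, mul_sub]; abel
    rw [hdecomp]
    refine Submodule.add_mem _ (Submodule.add_mem _ (Submodule.add_mem _ ?_ ?_) h3) (hw k)
    · exact mul_mem_smul_top_right _ _ (by simpa using Submodule.neg_mem _ (he k))
    · exact mul_mem_smul_top_left _ _ (by simpa using Submodule.neg_mem _ (hw k))
  -- idempotency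
  have hid : e * e = e := by
    rw [← sub_eq_zero]
    refine haus_of_equiv I eqv _ (fun k => ?_)
    obtain ⟨h1, h2⟩ := hifact k
    have hff : f k * f k = u ^ ((c k).factorial + (c k).factorial) := by
      simp only [hf, ← pow_add]
    have h3 : f k * f k - f k ∈ (I ^ k • ⊤ : Submodule O (Module.End O M)) := by
      rw [hff]
      refine hP k _ _ (by omega) (by omega) ?_
      exact ((Nat.modEq_zero_iff_dvd).mpr (dvd_add h2 h2)).trans
        ((Nat.modEq_zero_iff_dvd).mpr h2).symm
    have hdecomp : e * e - e =
        (e - f k) * e + f k * (e - f k) + (f k * f k - f k) + (f k - e) := by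
      simp only [sub_mul, mul_sub]; abel
    rw [hdecomp]
    refine Submodule.add_mem _ (Submodule.add_mem _ (Submodule.add_mem _ ?_ ?_) h3) (he k)
    · exact mul_mem_smul_top_right _ _ (by simpa using Submodule.neg_mem _ (he k))
    · exact mul_mem_smul_top_left _ _ (by simpa using Submodule.neg_mem _ (he k))
  -- commutation
  have hcomm : u * e = e * u := by
    rw [← sub_eq_zero]
    refine haus_of_equiv I eqv _ (fun k => ?_)
    have hcp : u * f k = f k * u := by
      simp only [hf]
      rw [← pow_succ', ← pow_succ]
    have hdecomp : u * e - e * u = u * (e - f k) + (f k - e) * u := by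
      rw [mul_sub, sub_mul, hcp]; abel
    rw [hdecomp]
    refine Submodule.add_mem _ ?_ ?_
    · exact mul_mem_smul_top_left _ _ (by simpa using Submodule.neg_mem _ (he k))
    · exact mul_mem_smul_top_right _ _ (he k)
  have hfix : ∀ x ∈ (LinearMap.range e : Set M), e x = x := by
    rintro x ⟨a, rfl⟩
    rw [← Module.End.mul_apply, hid]
  refine ⟨e, ?_, hid, hcomm, ⟨?_, ?_, ?_⟩, ?_⟩
  -- convergence
  · intro k
    refine ⟨c k, fun N hN => ?_⟩
    have h1 : u ^ N.factorial - f k ∈ (I ^ k • ⊤ : Submodule O (Module.End O M)) :=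
      hfP k N (c k) hN le_rfl
    have hdecomp : u ^ N.factorial - e = (u ^ N.factorial - f k) + (f k - e) := by abel
    rw [hdecomp]
    exact Submodule.add_mem _ h1 (he k)
  -- maps to
  · rintro x ⟨z, rfl⟩
    refine ⟨u z, ?_⟩
    calc e (u z) = (e * u) z := rfl
      _ = (u * e) z := by rw [hcomm]
      _ = u (e z) := rfl
  -- injective
  · intro x hx y hy hxy
    calc x = e x := (hfix x hx).symm
      _ = (w * u) x := by rw [hwu]
      _ = w (u x) := rfl
      _ = w (u y) := by rw [hxy]
      _ = (w * u) y := rfl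
      _ = e y := by rw [hwu]
      _ = y := hfix y hy
  -- surjective
  · intro x hx
    refine ⟨w x, ⟨w x, ?_⟩, ?_⟩
    · rw [← Module.End.mul_apply, hew]
    · calc u (w x) = (u * w) x := rfl
        _ = e x := by rw [hue]
        _ = x := hfix x hx
  -- convergence to zero on (1-e)M
  · rintro m' ⟨z, rfl⟩ k
    refine ⟨c k, fun N hN => ?_⟩
    obtain ⟨h1, h2⟩ := hfact k N hN
    obtain ⟨h3, h4⟩ := hifact k
    have h5 : u ^ N.factorial - u ^ (N.factorial + (c k).factorial) ∈
        (I ^ k • ⊤ : Submodule O (Module.End O M)) := by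
      refine hP k _ _ (by omega) (by omega) ?_
      exact ((Nat.modEq_zero_iff_dvd).mpr h2).trans
        ((Nat.modEq_zero_iff_dvd).mpr (dvd_add h2 h4)).symm
    have hproj : u ^ N.factorial * (1 - e) ∈ (I ^ k • ⊤ : Submodule O (Module.End O M)) := by
      have hpf : u ^ N.factorial * f k = u ^ (N.factorial + (c k).factorial) := by
        simp only [hf, ← pow_add]
      have hdecomp : u ^ N.factorial * (1 - e) =
          u ^ N.factorial * (f k - e) + (u ^ N.factorial - u ^ (N.factorial + (c k).factorial)) := by
        rw [mul_sub, mul_sub, mul_one, hpf]; abel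
      rw [hdecomp]
      exact Submodule.add_mem _ (mul_mem_smul_top_left _ _ (he k)) h5
    have happ : (u ^ N.factorial) ((1 - e) z) = (u ^ N.factorial * (1 - e)) z := rfl
    rw [happ]
    exact apply_mem_smul_top _ hproj z
end

section
/- Let k be a field, V and W finite-dimensional k-vector spaces with a nondegenerate bilinear pairing ⟨·,·⟩: V × W → k. Let u_1, …, u_n be pairwise commuting endomorphisms of V and v_1, …, v_n pairwise commuting endomorphisms of W such that ⟨u_j x, y⟩ = ⟨x, v_j y⟩ for all x ∈ V, y ∈ W, and all j. If there exists a nonzero x ∈ V with u_j x = c_j x for all j (for scalars c_j ∈ k), then there exists a nonzero y ∈ W with v_j y = c_j y for all j. -/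
/-- Transfer of simultaneous eigenvectors across a nondegenerate pairing: if `u_1, …, u_n` are
commuting endomorphisms of `V`, `v_1, …, v_n` commuting endomorphisms of `W`, adjoint to each
other under a nondegenerate pairing, and `V` contains a nonzero simultaneous eigenvector for
the `u_j` with eigenvalues `c_j`, then `W` contains a nonzero simultaneous eigenvector for the
`v_j` with the same eigenvalues. -/
theorem eigenvector_transfer_across_pairing {k V W : Type*} [Field k]
    [AddCommGroup V] [Module k V] [FiniteDimensional k V]
    [AddCommGroup W] [Module k W] [FiniteDimensional k W]
    (B : V →ₗ[k] W →ₗ[k] k)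
    (hB₁ : ∀ v : V, (∀ w : W, B v w = 0) → v = 0)
    (hB₂ : ∀ w : W, (∀ v : V, B v w = 0) → w = 0)
    {n : ℕ} (u : Fin n → Module.End k V) (v : Fin n → Module.End k W)
    (hu : ∀ i j, Commute (u i) (u j)) (hv : ∀ i j, Commute (v i) (v j))
    (hadj : ∀ (i : Fin n) (x : V) (y : W), B (u i x) y = B x (v i y))
    (c : Fin n → k) (x : V) (hx : x ≠ 0) (hxe : ∀ i, u i x = c i • x) :
    ∃ y : W, y ≠ 0 ∧ ∀ i, v i y = c i • y := by
  classical
  -- notation for the shifted operators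
  set T : Fin n → Module.End k W := fun j => v j - c j • 1 with hT
  set Tu : Fin n → Module.End k V := fun j => u j - c j • 1 with hTu
  -- adjointness of the shifted operators
  have hadjT : ∀ (j : Fin n) (a : V) (b : W), B (Tu j a) b = B a (T j b) := by
    intro j a b
    simp [hT, hTu, LinearMap.sub_apply, LinearMap.smul_apply, Module.End.one_apply,
      map_sub, map_smul, smul_eq_mul, hadj j]
  have hadjTpow : ∀ (j : Fin n) (m : ℕ) (a : V) (b : W),
      B ((Tu j ^ m) a) b = B a ((T j ^ m) b) := by
    intro j m
    induction m with
    | zero => intro a b; simp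
    | succ m ih =>
      intro a b
      rw [pow_succ, pow_succ', Module.End.mul_apply, Module.End.mul_apply, ih, hadjT]
  -- the eigenvector is killed by the shifted operators
  have hTux : ∀ j, Tu j x = 0 := by
    intro j
    simp [hTu, LinearMap.sub_apply, hxe j]
  have hBxT : ∀ (j : Fin n) (m : ℕ) (b : W), B x ((T j ^ (m + 1)) b) = 0 := by
    intro j m b
    rw [← hadjTpow j (m + 1) x b, pow_succ, Module.End.mul_apply, hTux j]
    simp
  -- commutation facts
  have hcomm : ∀ i j, Commute (v i) (T j) := fun i j =>
    (hv i j).sub_right ((Commute.one_right (v i)).smul_right (c j))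
  have hcommT : ∀ i j, Commute (T i) (T j) := fun i j =>
    ((hcomm i j).symm.sub_right (((Commute.one_right (T j)).smul_right (c i)))).symm
  -- Step 1: for every finite set `s` there is `w` in the intersection of the maximal
  -- generalized eigenspaces indexed by `s` pairing nontrivially with `x`.
  have step1 : ∀ s : Finset (Fin n), ∃ w : W,
      (∀ i ∈ s, w ∈ (v i).maxGenEigenspace (c i)) ∧ B x w ≠ 0 := by
    intro s
    induction s using Finset.induction_on with
    | empty =>
      have hex : ∃ w : W, B x w ≠ 0 := by
        by_contra h
        push_neg at h
        exact hx (hB₁ x h)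
      obtain ⟨w, hw⟩ := hex
      exact ⟨w, by simp, hw⟩
    | @insert j s hj ih =>
      obtain ⟨w, hwmem, hwB⟩ := ih
      set K : Submodule k W := ⨅ i ∈ s, (v i).maxGenEigenspace (c i) with hK
      have hmemK : ∀ z : W, z ∈ K ↔ ∀ i ∈ s, z ∈ (v i).maxGenEigenspace (c i) := by
        intro z; simp [hK, Submodule.mem_iInf]
      have hTK : ∀ z ∈ K, T j z ∈ K := by
        intro z hz
        rw [hmemK] at hz ⊢
        intro i hi
        exact Module.End.mapsTo_maxGenEigenspace_of_comm (hcomm i j) (c i) (hz i hi)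
      set g : Module.End k K := (T j).restrict hTK with hg
      -- Fitting decomposition for `g`
      obtain ⟨N, hN⟩ := Filter.eventually_atTop.mp
        (LinearMap.eventually_isCompl_ker_pow_range_pow g)
      have hC : IsCompl (LinearMap.ker (g ^ (N + 1))) (LinearMap.range (g ^ (N + 1))) :=
        hN (N + 1) (Nat.le_succ N)
      have hwK : w ∈ K := (hmemK w).mpr hwmem
      have htop : LinearMap.ker (g ^ (N + 1)) ⊔ LinearMap.range (g ^ (N + 1)) = ⊤ :=
        codisjoint_iff.mp hC.codisjoint
      have hmem : (⟨w, hwK⟩ : K) ∈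
          LinearMap.ker (g ^ (N + 1)) ⊔ LinearMap.range (g ^ (N + 1)) := by
        rw [htop]; trivial
      obtain ⟨a, ha, b, hb, hab⟩ := Submodule.mem_sup.mp hmem
      -- the range part pairs to zero with x
      have hBb : B x (b : W) = 0 := by
        obtain ⟨z, hz⟩ := hb
        have : (b : W) = ((T j) ^ (N + 1)) (z : W) := by
          rw [← hz, hg, Module.End.pow_restrict]
          rfl
        rw [this]
        exact hBxT j N (z : W)
      have habW : (a : W) + (b : W) = w := by
        have := congrArg (Subtype.val) hab
        simpa using this
      have hBa : B x (a : W) ≠ 0 := by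
        intro h
        apply hwB
        rw [← habW, map_add, h, hBb, add_zero]
      -- the kernel part lies in the generalized eigenspace for `v j`
      have haj : (a : W) ∈ (v j).maxGenEigenspace (c j) := by
        rw [Module.End.mem_maxGenEigenspace]
        refine ⟨N + 1, ?_⟩
        have : (g ^ (N + 1)) a = 0 := ha
        have h2 := congrArg (Subtype.val) this
        rw [hg, Module.End.pow_restrict] at h2
        simpa [hT] using h2
      refine ⟨(a : W), ?_, hBa⟩
      intro i hi
      rcases Finset.mem_insert.mp hi with rfl | hi
      · exact haj
      · exact (hmemK (a : W)).mp a.2 i hi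
  -- the intersection of all maximal generalized eigenspaces contains a nonzero vector
  obtain ⟨w₀, hw₀mem, hw₀B⟩ := step1 Finset.univ
  have hw₀ : w₀ ≠ 0 := by
    intro h; apply hw₀B; rw [h, map_zero]
  -- Step 2: descend to genuine simultaneous eigenvectors
  have step2 : ∀ s : Finset (Fin n), ∃ y : W, y ≠ 0 ∧
      (∀ i : Fin n, y ∈ (v i).maxGenEigenspace (c i)) ∧ ∀ i ∈ s, T i y = 0 := by
    intro s
    induction s using Finset.induction_on with
    | empty =>
      exact ⟨w₀, hw₀, fun i => hw₀mem i (Finset.mem_univ i), by simp⟩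
    | @insert j s hj ih =>
      obtain ⟨y, hy0, hymem, hyker⟩ := ih
      set S : Submodule k W :=
        (⨅ i : Fin n, (v i).maxGenEigenspace (c i)) ⊓ (⨅ i ∈ s, LinearMap.ker (T i)) with hS
      have hmemS : ∀ z : W, z ∈ S ↔
          (∀ i : Fin n, z ∈ (v i).maxGenEigenspace (c i)) ∧ ∀ i ∈ s, T i z = 0 := by
        intro z
        simp [hS, Submodule.mem_inf, Submodule.mem_iInf, LinearMap.mem_ker]
      have hTS : ∀ z ∈ S, T j z ∈ S := by
        intro z hz
        rw [hmemS] at hz ⊢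
        obtain ⟨hz1, hz2⟩ := hz
        constructor
        · intro i
          exact Module.End.mapsTo_maxGenEigenspace_of_comm (hcomm i j) (c i) (hz1 i)
        · intro i hi
          have : T i (T j z) = T j (T i z) := by
            have := (hcommT i j).eq
            calc T i (T j z) = (T i * T j) z := rfl
              _ = (T j * T i) z := by rw [this]
              _ = T j (T i z) := rfl
          rw [this, hz2 i hi, map_zero]
      set g : Module.End k S := (T j).restrict hTS with hg
      have hyS : y ∈ S := (hmemS y).mpr ⟨hymem, hyker⟩
      -- powers of an injective map are injective
      have hpowinj : Function.Injective ⇑g → ∀ m : ℕ, Function.Injective ⇑(g ^ m) := by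
        intro hinj m
        induction m with
        | zero => simp [pow_zero]; exact fun a b h => by simpa [Module.End.one_apply] using h
        | succ m ihm =>
          intro a b hab
          rw [pow_succ', Module.End.mul_apply, Module.End.mul_apply] at hab
          exact ihm (hinj hab)
      -- the kernel of g is nontrivial
      have hker : ∃ a : S, a ≠ 0 ∧ g a = 0 := by
        by_contra h
        push_neg at h
        have hinj : Function.Injective ⇑g := by
          rw [← LinearMap.ker_eq_bot]
          rw [Submodule.eq_bot_iff]
          intro a ha
          by_contra ha0
          exact (h a ha0) ha
        obtain ⟨m, hm⟩ := Module.End.mem_maxGenEigenspace _ _ _ |>.mp (hymem j)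
        have hgm : (g ^ m) ⟨y, hyS⟩ = 0 := by
          apply Subtype.coe_injective
          rw [hg, Module.End.pow_restrict]
          simpa [hT] using hm
        have : (⟨y, hyS⟩ : S) = 0 := hpowinj hinj m (by rw [hgm]; simp)
        exact hy0 (by simpa using congrArg Subtype.val this)
      obtain ⟨a, ha0, hga⟩ := hker
      have haW : (a : W) ≠ 0 := fun h => ha0 (Subtype.coe_injective (by simpa using h))
      have haS := a.2
      rw [hmemS] at haS
      refine ⟨(a : W), haW, haS.1, ?_⟩
      intro i hi
      rcases Finset.mem_insert.mp hi with rfl | hi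
      · have := congrArg (Subtype.val) hga
        simpa [hg] using this
      · exact haS.2 i hi
  obtain ⟨y, hy0, _, hyk⟩ := step2 Finset.univ
  refine ⟨y, hy0, fun i => ?_⟩
  have := hyk i (Finset.mem_univ i)
  rw [hT] at this
  have : v i y - c i • y = 0 := by simpa [LinearMap.sub_apply] using this
  exact sub_eq_zero.mp this
end
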